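/- Let ℐ be a finite set, 𝒪 = ℂ[X^{a,n}]_{(a,n)∈ℐ×ℤ}, and let v = Σ_{(a,n)∈ℐ×ℤ} P^{a,n}(X) D_{a,n} be an element of D̃er 𝒪 whose coefficients have widening gap. For any b,c ∈ ℐ and p ∈ ℤ, let S = Σ_{m∈ℤ} X^{b,m-p} D_{c,m} ∈ D̃er 𝒪. Then the bracket [S, v] is a well-defined element of D̃er 𝒪 and its coefficient collection again has widening gap. The same holds for D := Σ_{(a,m)} m X^{a,m} D_{a,m}. -/
import Mathlib


open MvPolynomial

lemma pderiv_mem_supported {σ : Type*} {s : Set σ} {q : MvPolynomial σ ℂ}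
    (h : q ∈ supported ℂ s) (i : σ) : pderiv i q ∈ supported ℂ s := by
  have h' : q ∈ Algebra.adjoin ℂ (MvPolynomial.X '' s) := h
  induction h' using Algebra.adjoin_induction with
  | mem x hx =>
      obtain ⟨j, hj, rfl⟩ := hx
      by_cases hij : j = i
      · subst hij; rw [pderiv_X_self]; exact one_mem _
      · rw [pderiv_X_of_ne hij]; exact zero_mem _
  | algebraMap r =>
      have : pderiv i (algebraMap ℂ (MvPolynomial σ ℂ) r) = 0 := pderiv_C
      rw [this]; exact zero_mem _
  | add x y hx hy ihx ihy => rw [map_add]; exact add_mem (ihx hx) (ihy hy)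
  | mul x y hx hy ihx ihy =>
      rw [pderiv_mul]
      exact add_mem (mul_mem (ihx hx) hy) (mul_mem hx (ihy hy))

lemma pderiv_ne_zero_finite {σ : Type*} (q : MvPolynomial σ ℂ) :
    {i | pderiv i q ≠ 0}.Finite := by
  apply q.vars.finite_toSet.subset
  intro i hi
  by_contra h
  exact hi (pderiv_eq_zero_of_notMem_vars h)


/-- 'Widening gap' for a collection of polynomials in `ℂ[X^{b,m}]_{(b,m)∈ℐ×ℤ}`. -/
def WideningGap {ι : Type*} (P : ι × ℤ → MvPolynomial (ι × ℤ) ℂ) : Prop :=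
  ∀ K : ℤ, 1 ≤ K →
    {n : ℤ | ¬ ∀ a : ι,
      P (a, n) ∈ MvPolynomial.supported ℂ {bm : ι × ℤ | |bm.2| < |n| - K}}.Finite

/-- The bracket on the completed space of vector fields `D̃er 𝒪`, computed
coefficient-wise:  the `(a,n)`-coefficient of `[Σ P D, Σ Q D]` is
`Σ_{(b,m)} (P^{b,m} ∂Q^{a,n}/∂X^{b,m} − Q^{b,m} ∂P^{a,n}/∂X^{b,m})`. -/
noncomputable def derBracket {ι : Type*}
    (P Q : ι × ℤ → MvPolynomial (ι × ℤ) ℂ) :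
    ι × ℤ → MvPolynomial (ι × ℤ) ℂ :=
  fun an => ∑ᶠ bm : ι × ℤ,
    (P bm * MvPolynomial.pderiv bm (Q an) - Q bm * MvPolynomial.pderiv bm (P an))

/-- Coefficients of `S = Σ_{m∈ℤ} X^{b,m-p} D_{c,m}`. -/
noncomputable def Scoef {ι : Type*} [DecidableEq ι] (b c : ι) (p : ℤ) :
    ι × ℤ → MvPolynomial (ι × ℤ) ℂ :=
  fun an => if an.1 = c then MvPolynomial.X (b, an.2 - p) else 0

/-- Coefficients of `D = Σ_{(a,m)} m X^{a,m} D_{a,m}`. -/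
noncomputable def Dcoef {ι : Type*} : ι × ℤ → MvPolynomial (ι × ℤ) ℂ :=
  fun am => am.2 • MvPolynomial.X am

/-- The adjoint action of `S = Σ_m X^{b,m-p} D_{c,m}` and of
`D = Σ_{(a,m)} m X^{a,m} D_{a,m}` on `D̃er 𝒪` is well defined (each bracket
coefficient is a finite sum) and preserves the widening-gap subspace. -/
theorem stmt6 {ι : Type*} [Fintype ι] [DecidableEq ι]
    (v : ι × ℤ → MvPolynomial (ι × ℤ) ℂ) (hv : WideningGap v)
    (b c : ι) (p : ℤ) :
    (∀ an : ι × ℤ,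
      {bm : ι × ℤ |
        Scoef b c p bm * MvPolynomial.pderiv bm (v an)
          - v bm * MvPolynomial.pderiv bm (Scoef b c p an) ≠ 0}.Finite) ∧
    WideningGap (derBracket (Scoef b c p) v) ∧
    (∀ an : ι × ℤ,
      {bm : ι × ℤ |
        Dcoef bm * MvPolynomial.pderiv bm (v an)
          - v bm * MvPolynomial.pderiv bm (Dcoef an) ≠ 0}.Finite) ∧
    WideningGap (derBracket (Dcoef : ι × ℤ → _) v) := by
  have hfinS : ∀ an : ι × ℤ,
      {bm : ι × ℤ |
        Scoef b c p bm * MvPolynomial.pderiv bm (v an)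
          - v bm * MvPolynomial.pderiv bm (Scoef b c p an) ≠ 0}.Finite := by
    intro an
    apply ((pderiv_ne_zero_finite (v an)).union (Set.finite_singleton (b, an.2 - p))).subset
    intro bm hbm
    simp only [Set.mem_setOf_eq] at hbm
    by_cases hd : pderiv bm (v an) = 0
    · right
      by_contra hne
      apply hbm
      rw [hd, mul_zero, zero_sub, neg_eq_zero]
      have : pderiv bm (Scoef b c p an) = 0 := by
        unfold Scoef
        split
        · exact pderiv_X_of_ne (by simpa using Ne.symm hne)
        · simp
      rw [this, mul_zero]
    · exact Or.inl hd
  have hfinD : ∀ an : ι × ℤ,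
      {bm : ι × ℤ |
        Dcoef bm * MvPolynomial.pderiv bm (v an)
          - v bm * MvPolynomial.pderiv bm (Dcoef an) ≠ 0}.Finite := by
    intro an
    apply ((pderiv_ne_zero_finite (v an)).union (Set.finite_singleton an)).subset
    intro bm hbm
    simp only [Set.mem_setOf_eq] at hbm
    by_cases hd : pderiv bm (v an) = 0
    · right
      by_contra hne
      apply hbm
      rw [hd, mul_zero, zero_sub, neg_eq_zero]
      have : pderiv bm (Dcoef an) = 0 := by
        unfold Dcoef
        rw [map_zsmul, pderiv_X_of_ne (by simpa using Ne.symm hne), smul_zero]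
      rw [this, mul_zero]
    · exact Or.inl hd
  refine ⟨hfinS, ?_, hfinD, ?_⟩
  · -- widening gap for [S, v]
    intro K hK
    set K₂ := K + 2 * |p| with hK₂def
    have hK₂ : 1 ≤ K₂ := by have := abs_nonneg p; omega
    have hB := hv K₂ hK₂
    have hB' : {n : ℤ | (n - p) ∈ {n : ℤ | ¬ ∀ a : ι,
        v (a, n) ∈ MvPolynomial.supported ℂ {bm : ι × ℤ | |bm.2| < |n| - K₂}}}.Finite :=
      hB.preimage (Set.injOn_of_injective (fun x y h => by omega))
    apply (hB.union hB').subset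
    intro n hn
    by_contra hcon
    rw [Set.mem_union] at hcon
    have h1 : ∀ a : ι, v (a, n) ∈ supported ℂ {bm : ι × ℤ | |bm.2| < |n| - K₂} :=
      not_not.mp (fun h => hcon (Or.inl h))
    have h2 : ∀ a : ι, v (a, n - p) ∈ supported ℂ {bm : ι × ℤ | |bm.2| < |n - p| - K₂} :=
      not_not.mp (fun h => hcon (Or.inr h))
    apply hn
    intro a
    have hf := hfinS (a, n)
    rw [derBracket, finsum_eq_sum _ hf]
    apply sum_mem
    intro bm _
    apply sub_mem
    · -- Scoef bm * pderiv bm (v (a,n))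
      by_cases hd : pderiv bm (v (a, n)) = 0
      · rw [hd, mul_zero]; exact zero_mem _
      · have hmem : bm ∈ (v (a, n)).vars := by
          by_contra h; exact hd (pderiv_eq_zero_of_notMem_vars h)
        have hvar : |bm.2| < |n| - K₂ := mem_supported.mp (h1 a) hmem
        apply mul_mem
        · unfold Scoef
          split
          · rw [X_mem_supported]
            show |bm.2 - p| < |n| - K
            have h1 := abs_sub bm.2 p
            have h2 := abs_nonneg p
            omega
          · exact zero_mem _
        · exact supported_mono (fun x hx => by
            simp only [Set.mem_setOf_eq] at hx ⊢
            have := abs_nonneg p; omega) (pderiv_mem_supported (h1 a) bm)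
    · -- v bm * pderiv bm (Scoef (a,n))
      by_cases hac : a = c
      · by_cases hbm : bm = (b, n - p)
        · subst hbm
          have : pderiv ((b, n - p) : ι × ℤ) (Scoef b c p (a, n)) = 1 := by
            unfold Scoef
            simp [hac, pderiv_X_self]
          rw [this, mul_one]
          refine supported_mono (fun x hx => ?_) (h2 b)
          simp only [Set.mem_setOf_eq] at hx ⊢
          have h3 := abs_sub n p
          have h4 := abs_nonneg p
          omega
        · have : pderiv bm (Scoef b c p (a, n)) = 0 := by
            unfold Scoef
            simp only [hac, if_pos]
            exact pderiv_X_of_ne (by simpa using Ne.symm hbm)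
          rw [this, mul_zero]; exact zero_mem _
      · have : pderiv bm (Scoef b c p (a, n)) = 0 := by
          unfold Scoef
          simp [hac]
        rw [this, mul_zero]; exact zero_mem _
  · -- widening gap for [D, v]
    intro K hK
    have hB := hv K hK
    apply hB.subset
    intro n hn
    by_contra hcon
    have h1 : ∀ a : ι, v (a, n) ∈ supported ℂ {bm : ι × ℤ | |bm.2| < |n| - K} :=
      not_not.mp hcon
    apply hn
    intro a
    have hf := hfinD (a, n)
    rw [derBracket, finsum_eq_sum _ hf]
    apply sum_mem
    intro bm _
    apply sub_mem
    · by_cases hd : pderiv bm (v (a, n)) = 0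
      · rw [hd, mul_zero]; exact zero_mem _
      · have hmem : bm ∈ (v (a, n)).vars := by
          by_contra h; exact hd (pderiv_eq_zero_of_notMem_vars h)
        have hvar : |bm.2| < |n| - K := mem_supported.mp (h1 a) hmem
        apply mul_mem
        · unfold Dcoef
          exact zsmul_mem (by rwa [X_mem_supported]) bm.2
        · exact pderiv_mem_supported (h1 a) bm
    · by_cases hbm : bm = (a, n)
      · subst hbm
        have : pderiv ((a, n) : ι × ℤ) (Dcoef ((a, n) : ι × ℤ)) =
            (n : ℤ) • (1 : MvPolynomial (ι × ℤ) ℂ) := by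
          unfold Dcoef
          rw [map_zsmul, pderiv_X_self]
        rw [this]
        exact mul_mem (h1 a) (zsmul_mem (one_mem _) n)
      · have : pderiv bm (Dcoef ((a, n) : ι × ℤ)) = 0 := by
          unfold Dcoef
          rw [map_zsmul, pderiv_X_of_ne (by simpa using Ne.symm hbm), smul_zero]
        rw [this, mul_zero]; exact zero_mem _
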